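/- Let ⟨A,m⟩ be a monotonic distributive semilattice. Define m_{R_m} on upsets of X(A) by P ∈ m_{R_m}(U) iff for all Z ∈ R_m(P), Z ∩ U ≠ ∅, where (P,Z) ∈ R_m iff m⁻¹(P) ∩ I_A(Z) = ∅. Then m_{R_m}(β(a)) = β(ma) for all a ∈ A; consequently β: A → Up(X(A)) is an injective homomorphism of monotonic distributive semilattices. -/
import Mathlib


namespace DS

variable {A : Type*} [SemilatticeInf A] [OrderTop A]

/-- A filter: an upset containing the top element, closed under meets. -/
def IsFilt (F : Set A) : Prop :=
  IsUpperSet F ∧ ⊤ ∈ F ∧ ∀ ⦃a b : A⦄, a ∈ F → b ∈ F → a ⊓ b ∈ F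

/-- An irreducible (prime) filter: a proper filter that is meet-irreducible
among filters. -/
def IsIrred (F : Set A) : Prop :=
  IsFilt F ∧ F ≠ Set.univ ∧
    ∀ F₁ F₂ : Set A, IsFilt F₁ → IsFilt F₂ → F = F₁ ∩ F₂ → F = F₁ ∨ F = F₂

/-- An order ideal: a downset in which every pair of elements has an upper
bound in the set. -/
def IsOrdIdeal (I : Set A) : Prop :=
  IsLowerSet I ∧ ∀ a ∈ I, ∀ b ∈ I, ∃ c ∈ I, a ≤ c ∧ b ≤ c

/-- Distributivity for a meet-semilattice with top. -/
def IsDistrib (A : Type*) [SemilatticeInf A] [OrderTop A] : Prop :=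
  ∀ a b c : A, a ⊓ b ≤ c → ∃ a₁ b₁ : A, a ≤ a₁ ∧ b ≤ b₁ ∧ c = a₁ ⊓ b₁

/-- The set of irreducible filters of `A`, ordered by inclusion. -/
def Spec (A : Type*) [SemilatticeInf A] [OrderTop A] : Type _ :=
  {P : Set A // IsIrred P}

instance : PartialOrder (Spec A) := Subtype.partialOrder _

/-- `beta a` = the set of irreducible filters containing `a`. -/
def beta (a : A) : Set (Spec A) := {P : Spec A | a ∈ P.1}

/-- The topology on `Spec A` generated by the basis `{beta aᶜ : a ∈ A}`. -/
def specTop (A : Type*) [SemilatticeInf A] [OrderTop A] : TopologicalSpace (Spec A) :=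
  TopologicalSpace.generateFrom {s : Set (Spec A) | ∃ a : A, s = (beta a)ᶜ}

/-- Special basic saturated subsets: intersections of dually directed families
of basic opens `beta aᶜ`. -/
def SBS (Z : Set (Spec A)) : Prop :=
  ∃ L : Set A, (∀ a ∈ L, ∀ b ∈ L, ∃ c ∈ L, beta a ∪ beta b ⊆ beta c) ∧
    Z = ⋂ a ∈ L, (beta a)ᶜ

/-- The order ideal associated to a special basic saturated set. -/
def IA (Z : Set (Spec A)) : Set A := {a : A | beta a ∩ Z = ∅}

/-- The special basic saturated set associated to an order ideal. -/
def alphaI (I : Set A) : Set (Spec A) := {P : Spec A | P.1 ∩ I = ∅}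

/-- The filter associated to a closed set. -/
def FY (Y : Set (Spec A)) : Set A := {a : A | Y ⊆ beta a}

/-- The multirelation `R_m` on the dual space. -/
def Rm (m : A → A) (P : Spec A) (Z : Set (Spec A)) : Prop :=
  {a : A | m a ∈ P.1} ∩ IA Z = ∅

/-- The multirelation `G_m` on the dual space. -/
def Gm (m : A → A) (P : Spec A) (Y : Set (Spec A)) : Prop :=
  FY Y ⊆ {a : A | m a ∈ P.1}

/-- The composed relation `R_m²`. -/
def Rm2 (m : A → A) (P : Spec A) (Z : Set (Spec A)) : Prop :=
  ∃ S : Set (Spec A), SBS S ∧ Rm m P S ∧ ∀ x ∈ S, Rm m x Z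

end DS

open DS Set

section Aux
variable {A : Type*} [SemilatticeInf A] [OrderTop A]

/-- the filter generated by a filter `F` and an element `x`. -/
lemma filtGen {F : Set A} (hF : IsFilt F) (x : A) :
    IsFilt {z : A | ∃ f ∈ F, f ⊓ x ≤ z} := by
  refine ⟨fun u v huv ⟨f, hf, hfx⟩ => ⟨f, hf, hfx.trans huv⟩, ⟨⊤, hF.2.1, le_top⟩, ?_⟩
  rintro u v ⟨f, hf, hfx⟩ ⟨g, hg, hgx⟩
  refine ⟨f ⊓ g, hF.2.2 hf hg, le_inf ?_ ?_⟩
  · exact le_trans (inf_le_inf_right x inf_le_left) hfx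
  · exact le_trans (inf_le_inf_right x inf_le_right) hgx

/-- Separation: if `¬ c ≤ a` there is an irreducible filter containing `c` but not `a`. -/
lemma sepLem (hA : IsDistrib A) {c a : A} (h : ¬ c ≤ a) :
    ∃ P : Spec A, c ∈ P.1 ∧ a ∉ P.1 := by
  set S : Set (Set A) := {F | IsFilt F ∧ c ∈ F ∧ a ∉ F} with hS
  have hc0 : {z : A | c ≤ z} ∈ S := by
    refine ⟨⟨fun u v huv hu => hu.trans huv, le_top, fun u v hu hv => le_inf hu hv⟩,
      le_rfl, h⟩
  obtain ⟨F, hF0, hFS, hFmax⟩ :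
      ∃ F, {z : A | c ≤ z} ⊆ F ∧ F ∈ S ∧ ∀ G, G ∈ S → F ⊆ G → G ⊆ F := by
    have hch : ∀ C ⊆ S, IsChain (· ⊆ ·) C → C.Nonempty → ∃ ub ∈ S, ∀ s ∈ C, s ⊆ ub := by
      rintro C hCS hchain ⟨F0, hF0⟩
      refine ⟨⋃₀ C, ⟨⟨?_, ?_, ?_⟩, ?_, ?_⟩, fun s hs => subset_sUnion_of_mem hs⟩
      · rintro u v huv ⟨F, hF, hu⟩
        exact ⟨F, hF, (hCS hF).1.1 huv hu⟩
      · exact ⟨F0, hF0, (hCS hF0).1.2.1⟩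
      · rintro u v ⟨F, hF, hu⟩ ⟨G, hG, hv⟩
        rcases hchain.total hF hG with hFG | hGF
        · exact ⟨G, hG, (hCS hG).1.2.2 (hFG hu) hv⟩
        · exact ⟨F, hF, (hCS hF).1.2.2 hu (hGF hv)⟩
      · exact ⟨F0, hF0, (hCS hF0).2.1⟩
      · rintro ⟨F, hF, ha⟩
        exact (hCS hF).2.2 ha
    obtain ⟨F, h1, h2⟩ := zorn_subset_nonempty S hch _ hc0
    exact ⟨F, h1, h2.1, fun G hG hFG => h2.2 hG hFG⟩
  have hFfilt : IsFilt F := hFS.1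
  have hcF : c ∈ F := hFS.2.1
  have haF : a ∉ F := hFS.2.2
  -- key: for x ∉ F, the filter generated by F and x contains a
  have key : ∀ x : A, x ∉ F → ∃ f ∈ F, f ⊓ x ≤ a := by
    intro x hx
    by_contra hcon
    push_neg at hcon
    have hGS : {z : A | ∃ f ∈ F, f ⊓ x ≤ z} ∈ S := by
      refine ⟨filtGen hFfilt x, ⟨c, hcF, inf_le_left.trans le_rfl⟩, ?_⟩
      rintro ⟨f, hf, hfx⟩; exact hcon f hf hfx
    have hsub : F ⊆ {z : A | ∃ f ∈ F, f ⊓ x ≤ z} :=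
      fun z hz => ⟨z, hz, inf_le_left⟩
    have := hFmax _ hGS hsub
    exact hx (this ⟨⊤, hFfilt.2.1, inf_le_right⟩)
  -- irreducibility
  have hirr : IsIrred F := by
    refine ⟨hFfilt, fun huniv => haF (huniv ▸ mem_univ a), ?_⟩
    intro F₁ F₂ h₁ h₂ hF12
    by_contra hcon
    push_neg at hcon
    obtain ⟨hne1, hne2⟩ := hcon
    have hsub1 : F ⊆ F₁ := hF12 ▸ inter_subset_left
    have hsub2 : F ⊆ F₂ := hF12 ▸ inter_subset_right
    obtain ⟨x, hx1, hxF⟩ : ∃ x, x ∈ F₁ ∧ x ∉ F := by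
      by_contra hc; push_neg at hc
      exact hne1 (Subset.antisymm hsub1 fun z hz => by_contra fun hzF => hzF (hc z hz))
    obtain ⟨y, hy2, hyF⟩ : ∃ y, y ∈ F₂ ∧ y ∉ F := by
      by_contra hc; push_neg at hc
      exact hne2 (Subset.antisymm hsub2 fun z hz => by_contra fun hzF => hzF (hc z hz))
    obtain ⟨f, hf, hfx⟩ := key x hxF
    obtain ⟨g, hg, hgy⟩ := key y hyF
    set hh := f ⊓ g with hhdef
    have hhF : hh ∈ F := hFfilt.2.2 hf hg
    have hhx : hh ⊓ x ≤ a := le_trans (inf_le_inf_right x inf_le_left) hfx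
    have hhy : hh ⊓ y ≤ a := le_trans (inf_le_inf_right y inf_le_right) hgy
    obtain ⟨h₁', x₁, hhh1, hxx1, ha1⟩ := hA hh x a hhx
    have hhyx1 : hh ⊓ y ≤ x₁ := hhy.trans (ha1 ▸ inf_le_right)
    obtain ⟨h₂', y₁, hhh2, hyy1, hx1eq⟩ := hA hh y x₁ hhyx1
    have hx1F1 : x₁ ∈ F₁ := h₁.1 hxx1 hx1
    have hx1F2 : x₁ ∈ F₂ := by
      have hy1F2 : y₁ ∈ F₂ := h₂.1 hyy1 hy2
      have hh2F2 : h₂' ∈ F₂ := h₂.1 hhh2 (hsub2 hhF)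
      exact hx1eq ▸ h₂.2.2 hh2F2 hy1F2
    have hx1F : x₁ ∈ F := hF12 ▸ ⟨hx1F1, hx1F2⟩
    have hh1F : h₁' ∈ F := hFfilt.1 hhh1 hhF
    exact haF (ha1 ▸ hFfilt.2.2 hh1F hx1F)
  exact ⟨⟨F, hirr⟩, hcF, haF⟩

lemma beta_mono {x y : A} (h : x ≤ y) : beta x ⊆ beta (y : A) :=
  fun P hP => P.2.1.1 h hP

lemma beta_reflect (hA : IsDistrib A) {x y : A} (h : beta x ⊆ beta y) : x ≤ y := by
  by_contra hc
  obtain ⟨P, hxP, hyP⟩ := sepLem hA hc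
  exact hyP (h hxP)

end Aux

theorem stmt12 {A : Type*} [SemilatticeInf A] [OrderTop A] (hA : IsDistrib A)
    (m : A → A) (hm : ∀ a b : A, a ≤ b → m a ≤ m b) :
    (∀ a : A,
      {P : Spec A | ∀ Z : Set (Spec A), SBS Z → Rm m P Z → (Z ∩ beta a).Nonempty} =
        beta (m a)) ∧
    Function.Injective (beta : A → Set (Spec A)) ∧
    (∀ a b : A, beta (a ⊓ b) = beta a ∩ beta b) ∧
    beta (⊤ : A) = (Set.univ : Set (Spec A)) := by
  refine ⟨?_, ?_, ?_, ?_⟩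
  · intro a
    ext P
    simp only [mem_setOf_eq, beta]
    constructor
    · intro hP
      by_contra hma
      have hSBS : SBS ((beta a)ᶜ : Set (Spec A)) := by
        refine ⟨{a}, ?_, ?_⟩
        · rintro x hx y hy
          refine ⟨a, rfl, ?_⟩
          rcases hx with rfl
          rcases hy with rfl
          exact union_subset subset_rfl subset_rfl
        · simp
      have hRm : Rm m P ((beta a)ᶜ : Set (Spec A)) := by
        rw [Rm, eq_empty_iff_forall_notMem]
        rintro x ⟨hmx, hxIA⟩
        have hsub : beta x ⊆ beta a := by
          rw [IA, mem_setOf_eq, ← disjoint_iff_inter_eq_empty,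
            disjoint_compl_right_iff_subset] at hxIA
          exact hxIA
        exact hma (P.2.1.1 (hm _ _ (beta_reflect hA hsub)) hmx)
      obtain ⟨Q, hQ1, hQ2⟩ := hP _ hSBS hRm
      exact hQ1 hQ2
    · intro hma Z hZ hRm
      by_contra hemp
      rw [not_nonempty_iff_eq_empty] at hemp
      have haIA : a ∈ IA Z := by
        rw [IA, mem_setOf_eq, inter_comm]
        exact hemp
      have hmem : a ∈ ({x : A | m x ∈ P.1} ∩ IA Z) := ⟨hma, haIA⟩
      rw [Rm] at hRm
      rw [hRm] at hmem
      exact hmem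
  · intro a b h
    exact le_antisymm (beta_reflect hA h.le) (beta_reflect hA h.ge)
  · intro a b
    ext P
    exact ⟨fun h => ⟨P.2.1.1 inf_le_left h, P.2.1.1 inf_le_right h⟩,
      fun h => P.2.1.2.2 h.1 h.2⟩
  · exact eq_univ_of_forall fun P => P.2.1.2.1
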